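/- arXiv:1405.4047 — 2 statements merged into one kernel-verified Lean document; each statement's English description precedes it below -/
import Mathlib

section
/- Minimum margin resolution bound (Theorem 3): Let ρ ∈ ℝ^P with ρ ≠ 0, let X_max = max_{1≤i≤N} ‖x_i‖₂, and let γ_min = min_{1≤i≤N} |⟨ρ, x_i⟩| / ‖ρ‖₂; assume γ_min > 0. If Λ is a positive integer with Λ > X_max·√P / (2·γ_min), then there exists λ ∈ ℤ^P with |λ_j| ≤ Λ for all j = 1,…,P such that Σ_{i=1}^{N} 1[y_i·⟨λ, x_i⟩ ≤ 0] ≤ Σ_{i=1}^{N} 1[y_i·⟨ρ, x_i⟩ ≤ 0]. -/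
/-- **Minimum margin resolution bound** (Theorem 3). If the integer resolution `Λ` exceeds
`X_max √P / (2 γ_min)`, then some integer coefficient vector bounded by `Λ` attains a 0–1 loss
no worse than that of `ρ`. -/
theorem min_margin_resolution_bound {P N : ℕ}
    (x : Fin N → EuclideanSpace ℝ (Fin P)) (y : Fin N → ℝ)
    (hy : ∀ i, y i = 1 ∨ y i = -1)
    (ρ : EuclideanSpace ℝ (Fin P)) (hρ : ρ ≠ 0)
    (Xmax γmin : ℝ)
    (hXmax : ∀ i, ‖x i‖ ≤ Xmax)
    (hγmin : ∀ i, γmin ≤ |(inner ℝ ρ (x i) : ℝ)| / ‖ρ‖)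
    (hγpos : 0 < γmin)
    (Λ : ℕ) (hΛpos : 0 < Λ)
    (hΛ : (Λ : ℝ) > Xmax * Real.sqrt P / (2 * γmin)) :
    ∃ l : Fin P → ℤ, (∀ j, |l j| ≤ (Λ : ℤ)) ∧
      ∑ i : Fin N,
          (if y i * (inner ℝ ((WithLp.equiv 2 (Fin P → ℝ)).symm (fun j => (l j : ℝ))) (x i) : ℝ) ≤ 0
            then (1 : ℝ) else 0) ≤
        ∑ i : Fin N, (if y i * (inner ℝ ρ (x i) : ℝ) ≤ 0 then (1 : ℝ) else 0) := by
  classical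
  have hnρ : (0:ℝ) < ‖ρ‖ := norm_pos_iff.mpr hρ
  set t : Fin P → ℝ := fun j => (Λ : ℝ) * ρ j / ‖ρ‖ with ht
  set l : Fin P → ℤ := fun j => round (t j) with hldef
  have habs_t : ∀ j, |t j| ≤ (Λ : ℝ) := by
    intro j
    have hcoord : |ρ j| ≤ ‖ρ‖ := by
      have h1 : Real.sqrt ((ρ j)^2) ≤ Real.sqrt (∑ k, (ρ k)^2) := by
        apply Real.sqrt_le_sqrt
        exact Finset.single_le_sum (fun k _ => sq_nonneg (ρ k)) (Finset.mem_univ j)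
      rw [Real.sqrt_sq_eq_abs] at h1
      rw [EuclideanSpace.norm_eq]
      simpa [sq_abs] using h1
    have hΛ0 : (0:ℝ) ≤ (Λ:ℝ) := by positivity
    rw [ht, abs_div, abs_mul, abs_of_nonneg hΛ0, abs_of_nonneg (le_of_lt hnρ),
      div_le_iff₀ hnρ]
    nlinarith [abs_nonneg (ρ j)]
  have hbound : ∀ j, |l j| ≤ (Λ : ℤ) := by
    intro j
    have h1 : |t j - round (t j)| ≤ 1/2 := abs_sub_round (t j)
    have h2 : |((l j : ℤ) : ℝ)| ≤ (Λ:ℝ) + 1/2 := by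
      have := abs_sub_abs_le_abs_sub ((round (t j) : ℝ)) (t j)
      have h3 : |((round (t j) : ℤ) : ℝ)| ≤ |t j| + 1/2 := by
        have h4 := abs_sub_round (t j)
        rw [abs_sub_comm] at h4
        calc |((round (t j) : ℤ) : ℝ)| = |((round (t j) : ℝ) - t j) + t j| := by ring_nf
          _ ≤ |((round (t j) : ℝ) - t j)| + |t j| := abs_add_le _ _
          _ ≤ 1/2 + |t j| := by linarith
          _ = |t j| + 1/2 := by ring
      exact le_trans h3 (by linarith [habs_t j])
    have h6 : |l j| < (Λ:ℤ) + 1 := by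
      have h5 : |((l j : ℤ) : ℝ)| < (Λ:ℝ) + 1 := by linarith
      exact_mod_cast h5
    omega
  refine ⟨l, hbound, ?_⟩
  set ev : EuclideanSpace ℝ (Fin P) :=
    (WithLp.equiv 2 (Fin P → ℝ)).symm (fun j => (l j : ℝ) - t j) with hev
  have hdecomp : (WithLp.equiv 2 (Fin P → ℝ)).symm (fun j => ((l j : ℤ) : ℝ))
      = ev + ((Λ:ℝ) / ‖ρ‖) • ρ := by
    ext j
    simp only [hev, WithLp.equiv_symm_apply, PiLp.toLp_apply, PiLp.add_apply, PiLp.smul_apply,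
      smul_eq_mul, ht]
    field_simp
    ring
  have hev_norm : ‖ev‖ ≤ Real.sqrt P / 2 := by
    rw [EuclideanSpace.norm_eq]
    have hsum : ∑ j, ‖ev j‖^2 ≤ (P:ℝ) * (1/2)^2 := by
      calc ∑ j, ‖ev j‖^2 ≤ ∑ _j : Fin P, ((1:ℝ)/2)^2 := by
            apply Finset.sum_le_sum
            intro j _
            have hj : |ev j| ≤ 1/2 := by
              have h4 := abs_sub_round (t j)
              rw [abs_sub_comm] at h4
              simpa [hev, WithLp.equiv_symm_apply, PiLp.toLp_apply] using h4
            rw [Real.norm_eq_abs]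
            calc |ev j|^2 ≤ (1/2:ℝ)^2 := by nlinarith [abs_nonneg (ev j)]
              _ = ((1:ℝ)/2)^2 := by norm_num
        _ = (P:ℝ) * (1/2)^2 := by
            rw [Finset.sum_const, Finset.card_univ, Fintype.card_fin, nsmul_eq_mul]
    calc Real.sqrt (∑ j, ‖ev j‖^2) ≤ Real.sqrt ((P:ℝ) * (1/2)^2) :=
          Real.sqrt_le_sqrt hsum
      _ = Real.sqrt P / 2 := by
          rw [Real.sqrt_mul (by positivity), Real.sqrt_sq (by norm_num)]
          ring
  apply Finset.sum_le_sum
  intro i _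
  by_cases hρi : y i * (inner ℝ ρ (x i) : ℝ) ≤ 0
  · split_ifs <;> norm_num
  · push_neg at hρi
    have habsy : |y i| = 1 := by rcases hy i with h | h <;> simp [h]
    have hli : 0 < y i *
        (inner ℝ ((WithLp.equiv 2 (Fin P → ℝ)).symm (fun j => ((l j : ℤ) : ℝ))) (x i) : ℝ) := by
      rw [hdecomp]
      rw [inner_add_left, real_inner_smul_left]
      have h1 : |(inner ℝ ev (x i) : ℝ)| ≤ Real.sqrt P / 2 * Xmax := by
        refine le_trans (abs_real_inner_le_norm ev (x i)) ?_
        exact mul_le_mul hev_norm (hXmax i) (norm_nonneg _) (by positivity)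
      have h2 : (Λ:ℝ) * γmin ≤ (Λ:ℝ) * (|(inner ℝ ρ (x i) : ℝ)| / ‖ρ‖) := by
        apply mul_le_mul_of_nonneg_left (hγmin i) (by positivity)
      have h3 : Xmax * Real.sqrt P / 2 < (Λ:ℝ) * γmin := by
        rw [gt_iff_lt, div_lt_iff₀ (by positivity : (0:ℝ) < 2 * γmin)] at hΛ
        nlinarith
      have h4 : y i * (inner ℝ ρ (x i) : ℝ) = |(inner ℝ ρ (x i) : ℝ)| := by
        have := abs_of_pos hρi
        rw [abs_mul, habsy, one_mul] at this
        linarith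
      have h5 : -( Real.sqrt P / 2 * Xmax) ≤ y i * (inner ℝ ev (x i) : ℝ) := by
        have h6 : |y i * (inner ℝ ev (x i) : ℝ)| ≤ Real.sqrt P / 2 * Xmax := by
          rw [abs_mul, habsy, one_mul]; exact h1
        linarith [neg_abs_le (y i * (inner ℝ ev (x i) : ℝ))]
      have h7 : y i * ((inner ℝ ev (x i) : ℝ) + (Λ:ℝ) / ‖ρ‖ * (inner ℝ ρ (x i) : ℝ))
          = y i * (inner ℝ ev (x i) : ℝ) + (Λ:ℝ) * (|(inner ℝ ρ (x i) : ℝ)| / ‖ρ‖) := by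
        rw [mul_add]
        congr 1
        rw [show y i * ((Λ:ℝ) / ‖ρ‖ * (inner ℝ ρ (x i) : ℝ))
            = (Λ:ℝ) / ‖ρ‖ * (y i * (inner ℝ ρ (x i) : ℝ)) by ring, h4]
        ring
      rw [h7]
      nlinarith
    split_ifs with h8 h9
    · norm_num
    · linarith
    · norm_num
    · norm_num
end

section
/- Guaranteeing perfect accuracy on the negative class via the weight W⁺ (claim of Section 2.6): Let I⁺ and I⁻ partition {1,…,N} with N⁺ = |I⁺| and N⁻ = |I⁻|, let e_i(λ) = 1[y_i·⟨λ, x_i⟩ ≤ 0], and for 0 < W⁺ < 1 with W⁻ = 1 − W⁺ define the weighted loss Z(λ) = (1/N)·( W⁺·Σ_{i∈I⁺} e_i(λ) + W⁻·Σ_{i∈I⁻} e_i(λ) ). Let L ⊆ ℝ^P and suppose there exists λ₀ ∈ L with e_i(λ₀) = 0 for all i ∈ I⁻. If W⁺ < 1/(1 + N⁺), then every minimizer λ* of Z over L satisfies e_i(λ*) = 0 for all i ∈ I⁻, i.e., it classifies all negatively-labeled examples correctly. -/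
/-- **Guaranteeing perfect accuracy on the negative class via the weight W⁺**
(claim of Section 2.6). If `W⁺ < 1/(1+N⁺)` and some feasible classifier makes no errors on
the negative class, then every minimizer of the weighted 0–1 loss makes no errors on the
negative class. -/
theorem weighted_loss_perfect_negative_class {P N : ℕ}
    (x : Fin N → EuclideanSpace ℝ (Fin P)) (y : Fin N → ℝ)
    (hy : ∀ i, y i = 1 ∨ y i = -1)
    (Ip Im : Finset (Fin N))
    (hIp : Ip = Finset.univ.filter (fun i => y i = 1))
    (hIm : Im = Finset.univ.filter (fun i => y i = -1))
    (e : EuclideanSpace ℝ (Fin P) → Fin N → ℝ)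
    (he : ∀ v i, e v i = if y i * (inner ℝ v (x i) : ℝ) ≤ 0 then (1 : ℝ) else 0)
    (Wp : ℝ) (hWp0 : 0 < Wp) (hWp1 : Wp < 1)
    (Z : EuclideanSpace ℝ (Fin P) → ℝ)
    (hZ : ∀ v, Z v = (1 / (N : ℝ)) *
      (Wp * ∑ i ∈ Ip, e v i + (1 - Wp) * ∑ i ∈ Im, e v i))
    (L : Set (EuclideanSpace ℝ (Fin P)))
    (l0 : EuclideanSpace ℝ (Fin P)) (hl0 : l0 ∈ L)
    (hl0neg : ∀ i ∈ Im, e l0 i = 0)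
    (hW : Wp < 1 / (1 + (Ip.card : ℝ)))
    (lstar : EuclideanSpace ℝ (Fin P)) (hmem : lstar ∈ L)
    (hmin : ∀ v ∈ L, Z lstar ≤ Z v) :
    ∀ i ∈ Im, e lstar i = 0 := by
  intro i hi
  by_contra hne
  -- e takes values 0 or 1
  have he01 : ∀ v j, e v j = 0 ∨ e v j = 1 := by
    intro v j; rw [he]; split <;> simp
  have hei : e lstar i = 1 := (he01 lstar i).resolve_left hne
  -- N > 0 since i : Fin N
  have hNpos : 0 < N := i.2.trans_le (le_refl N) |>.trans_le' (Nat.zero_le _) |>.trans_le (le_refl N)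
  have hN : (0 : ℝ) < N := by exact_mod_cast i.pos
  have hinv : (0 : ℝ) < 1 / (N : ℝ) := by positivity
  have henn : ∀ v j, (0 : ℝ) ≤ e v j := fun v j => by
    rcases he01 v j with h | h <;> simp [h]
  have hle1 : ∀ v j, e v j ≤ 1 := fun v j => by
    rcases he01 v j with h | h <;> simp [h]
  -- Z l0 ≤ (1/N) * Wp * |Ip|
  have hZl0 : Z l0 ≤ (1 / (N : ℝ)) * (Wp * Ip.card) := by
    rw [hZ]
    have h1 : ∑ j ∈ Ip, e l0 j ≤ (Ip.card : ℝ) := by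
      calc ∑ j ∈ Ip, e l0 j ≤ ∑ j ∈ Ip, (1 : ℝ) :=
            Finset.sum_le_sum fun j _ => hle1 l0 j
        _ = Ip.card := by simp
    have h2 : ∑ j ∈ Im, e l0 j = 0 := Finset.sum_eq_zero hl0neg
    rw [h2]
    have : Wp * ∑ j ∈ Ip, e l0 j + (1 - Wp) * 0 ≤ Wp * Ip.card := by
      nlinarith
    exact mul_le_mul_of_nonneg_left this (le_of_lt hinv)
  -- Z lstar ≥ (1/N) * (1 - Wp)
  have hZls : (1 / (N : ℝ)) * (1 - Wp) ≤ Z lstar := by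
    rw [hZ]
    have h1 : (0 : ℝ) ≤ ∑ j ∈ Ip, e lstar j :=
      Finset.sum_nonneg fun j _ => henn lstar j
    have h2 : (1 : ℝ) ≤ ∑ j ∈ Im, e lstar j := by
      calc (1 : ℝ) = e lstar i := hei.symm
        _ ≤ ∑ j ∈ Im, e lstar j :=
            Finset.single_le_sum (fun j _ => henn lstar j) hi
    have : (1 - Wp) ≤ Wp * ∑ j ∈ Ip, e lstar j + (1 - Wp) * ∑ j ∈ Im, e lstar j := by
      nlinarith
    exact mul_le_mul_of_nonneg_left this (le_of_lt hinv)
  have hmin' := hmin l0 hl0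
  -- combine: (1 - Wp) ≤ Wp * Ip.card
  have hkey : (1 - Wp) ≤ Wp * Ip.card :=
    le_of_mul_le_mul_left (by linarith) hinv
  -- but hW gives Wp * (1 + Ip.card) < 1
  have hcard : (0 : ℝ) < 1 + (Ip.card : ℝ) := by positivity
  have : Wp * (1 + (Ip.card : ℝ)) < 1 := by
    rw [div_eq_inv_mul] at hW
    calc Wp * (1 + (Ip.card : ℝ)) < (1 + (Ip.card : ℝ))⁻¹ * (1 + (Ip.card : ℝ)) :=
          mul_lt_mul_of_pos_right (by linarith) hcard
      _ = 1 := inv_mul_cancel₀ (ne_of_gt hcard)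
  linarith
end
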